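/- Let 0 ≤ λ_i ≤ 1 with λ_1 + λ_2 < 1 and λ_2 + λ_3 < 1, and let the 3-queue path-graph system evolve under the inner-queue-priority MSM policy π̃_IQ defined by: S(t) = (1,0,1) if Q_1(t) > 0 and Q_3(t) > 0; otherwise S(t) = (0,1,0) if Q_2(t) > 0; otherwise S(t) = (1,0,1). Then limsup_{T→∞} (1/T) ∑_{t=0}^{T−1} ∑_{i=1}^{3} E[Q_i(t)] < ∞, i.e., π̃_IQ is throughput-optimal. -/

import Mathlib

open MeasureTheory ProbabilityTheory Filter
open scoped ENNReal

/-- The inner-queue-priority MSM policy π̃_IQ for the 3-queue path graph: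
serve queues 1 and 3 if both are nonempty; else serve queue 2 if nonempty;
else serve queues 1 and 3. -/
def piIQtilde (q : Fin 3 → ℕ) : Fin 3 → ℕ :=
  if 0 < q 0 ∧ 0 < q 2 then ![1, 0, 1]
  else if 0 < q 1 then ![0, 1, 0]
  else ![1, 0, 1]

/-- History functional computing the workload of a pair of queues from the arrival history. -/
def histG (i₀ i₁ : Fin 3) : ℕ → ((Fin 3 × ℕ) → ℕ) → ℕ
  | 0, _ => 0
  | t + 1, a => (histG i₀ i₁ t a - 1) + (a (i₀, t) + a (i₁, t))

lemma histG_congr (i₀ i₁ : Fin 3) (t : ℕ) (a b : (Fin 3 × ℕ) → ℕ)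
    (h : ∀ p : Fin 3 × ℕ, p.2 < t → a p = b p) :
    histG i₀ i₁ t a = histG i₀ i₁ t b := by
  induction t with
  | zero => rfl
  | succ t ih =>
    simp only [histG]
    rw [ih (fun p hp => h p (hp.trans (Nat.lt_succ_self t))),
      h (i₀, t) (Nat.lt_succ_self t), h (i₁, t) (Nat.lt_succ_self t)]

lemma two_sub_ne_zero {ρ : ℝ≥0∞} (hρ : ρ < 1) : (2 : ℝ≥0∞) - 2 * ρ ≠ 0 := by
  have h2 : 2 * ρ < 2 := by
    have := ENNReal.mul_lt_mul_left (a := 2) (by norm_num) (by norm_num) hρ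
    rw [mul_comm, one_mul] at this
    exact this
  intro h
  exact absurd (tsub_eq_zero_iff_le.1 h) (not_le.2 h2)

lemma two_sub_ne_top {ρ : ℝ≥0∞} : (2 : ℝ≥0∞) - 2 * ρ ≠ ⊤ :=
  ne_top_of_le_ne_top (by norm_num) tsub_le_self

/-- Foster–Lyapunov drift bound for a single-server queue with unit service,
batch arrivals of size at most `2` and traffic intensity `ρ < 1`. -/
lemma drift_bound {Ω : Type*} [MeasurableSpace Ω] (μ : Measure Ω) [IsProbabilityMeasure μ]
    (X B : ℕ → Ω → ℕ)
    (hXmeas : ∀ t, Measurable (X t)) (hBmeas : ∀ t, Measurable (B t))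
    (hX0 : ∀ ω, X 0 ω = 0) (hB2 : ∀ t ω, B t ω ≤ 2)
    (hrec : ∀ t ω, X (t + 1) ω = (X t ω - 1) + B t ω)
    (ρ : ℝ≥0∞) (hρ : ρ < 1)
    (hcross : ∀ t, ∫⁻ ω, ((X t ω : ℝ≥0∞) * (B t ω : ℝ≥0∞)) ∂μ
      ≤ ρ * ∫⁻ ω, (X t ω : ℝ≥0∞) ∂μ) :
    ∀ T : ℕ, (∑ t ∈ Finset.range T, ∫⁻ ω, (X t ω : ℝ≥0∞) ∂μ) ≤ 5 / (2 - 2 * ρ) * T := by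
  have hcast : Measurable (fun n : ℕ => (n : ℝ≥0∞)) := measurable_of_countable _
  have hXm : ∀ t, Measurable (fun ω => (X t ω : ℝ≥0∞)) := fun t => hcast.comp (hXmeas t)
  have hBm : ∀ t, Measurable (fun ω => (B t ω : ℝ≥0∞)) := fun t => hcast.comp (hBmeas t)
  set e : ℕ → ℝ≥0∞ := fun t => ∫⁻ ω, (X t ω : ℝ≥0∞) ∂μ with he
  set s : ℕ → ℝ≥0∞ := fun t => ∫⁻ ω, (X t ω : ℝ≥0∞) ^ 2 ∂μ with hs
  have hXle : ∀ t ω, X t ω ≤ 2 * t := by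
    intro t
    induction t with
    | zero => intro ω; simp [hX0]
    | succ t ih =>
      intro ω
      rw [hrec]
      have h1 := ih ω
      have h2 := hB2 t ω
      omega
  have hefin : ∀ t, e t ≠ ⊤ := by
    intro t
    have hle : e t ≤ ((2 * t : ℕ) : ℝ≥0∞) := by
      rw [he]
      calc ∫⁻ ω, (X t ω : ℝ≥0∞) ∂μ ≤ ∫⁻ _, ((2 * t : ℕ) : ℝ≥0∞) ∂μ :=
            lintegral_mono fun ω => Nat.cast_le.2 (hXle t ω)
        _ = ((2 * t : ℕ) : ℝ≥0∞) := by simp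
    exact ne_top_of_le_ne_top (ENNReal.natCast_ne_top _) hle
  have step : ∀ t, s (t + 1) + 2 * e t ≤ s t + 2 * ρ * e t + 5 := by
    intro t
    have hpt : ∀ ω, (X (t + 1) ω : ℝ≥0∞) ^ 2 + 2 * (X t ω : ℝ≥0∞)
        ≤ (X t ω : ℝ≥0∞) ^ 2 + (2 * ((X t ω : ℝ≥0∞) * (B t ω : ℝ≥0∞)) + 5) := by
      intro ω
      have hb := hB2 t ω
      have hnat : (X (t + 1) ω) ^ 2 + 2 * X t ω
          ≤ (X t ω) ^ 2 + (2 * (X t ω * B t ω) + 5) := by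
        rw [hrec]
        rcases Nat.eq_zero_or_pos (X t ω) with h | h
        · rw [h]; interval_cases h2 : (B t ω) <;> simp
        · obtain ⟨n, hn⟩ : ∃ n, X t ω = n + 1 := ⟨X t ω - 1, by omega⟩
          rw [hn]
          simp only [Nat.add_sub_cancel]
          nlinarith [hb]
      exact_mod_cast hnat
    have h1 : s (t + 1) + 2 * e t
        = ∫⁻ ω, ((X (t + 1) ω : ℝ≥0∞) ^ 2 + 2 * (X t ω : ℝ≥0∞)) ∂μ := by
      rw [hs, he]
      rw [lintegral_add_left ((hXm (t + 1)).pow_const 2), lintegral_const_mul 2 (hXm t)]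
    have h3 : ∫⁻ ω, ((X t ω : ℝ≥0∞) ^ 2 + (2 * ((X t ω : ℝ≥0∞) * (B t ω : ℝ≥0∞)) + 5)) ∂μ
        = s t + (2 * ∫⁻ ω, (X t ω : ℝ≥0∞) * (B t ω : ℝ≥0∞) ∂μ + 5) := by
      rw [lintegral_add_left ((hXm t).pow_const 2),
        lintegral_add_left (f := fun ω => 2 * ((X t ω : ℝ≥0∞) * (B t ω : ℝ≥0∞)))
          (((hXm t).mul (hBm t)).const_mul 2),
        lintegral_const_mul (f := fun ω => (X t ω : ℝ≥0∞) * (B t ω : ℝ≥0∞)) 2 ((hXm t).mul (hBm t))]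
      simp [hs]
    calc s (t + 1) + 2 * e t
        = ∫⁻ ω, ((X (t + 1) ω : ℝ≥0∞) ^ 2 + 2 * (X t ω : ℝ≥0∞)) ∂μ := h1
      _ ≤ ∫⁻ ω, ((X t ω : ℝ≥0∞) ^ 2 + (2 * ((X t ω : ℝ≥0∞) * (B t ω : ℝ≥0∞)) + 5)) ∂μ :=
          lintegral_mono hpt
      _ = s t + (2 * ∫⁻ ω, (X t ω : ℝ≥0∞) * (B t ω : ℝ≥0∞) ∂μ + 5) := h3
      _ ≤ s t + (2 * (ρ * e t) + 5) := by
          gcongr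
          exact hcross t
      _ = s t + 2 * ρ * e t + 5 := by ring
  have key : ∀ T : ℕ, s T + 2 * ∑ t ∈ Finset.range T, e t
      ≤ 2 * ρ * (∑ t ∈ Finset.range T, e t) + 5 * T := by
    intro T
    induction T with
    | zero => simp [hs, hX0]
    | succ T ih =>
      rw [Finset.sum_range_succ]
      push_cast
      calc s (T + 1) + 2 * (∑ t ∈ Finset.range T, e t + e T)
          = (s (T + 1) + 2 * e T) + 2 * ∑ t ∈ Finset.range T, e t := by ring
        _ ≤ (s T + 2 * ρ * e T + 5) + 2 * ∑ t ∈ Finset.range T, e t :=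
            add_le_add_left (step T) _
        _ = (s T + 2 * ∑ t ∈ Finset.range T, e t) + (2 * ρ * e T + 5) := by ring
        _ ≤ (2 * ρ * (∑ t ∈ Finset.range T, e t) + 5 * T) + (2 * ρ * e T + 5) :=
            add_le_add_left ih _
        _ = 2 * ρ * (∑ t ∈ Finset.range T, e t + e T) + 5 * (T + 1) := by ring
  intro T
  set E := ∑ t ∈ Finset.range T, e t with hE
  have hEfin : E ≠ ⊤ := by
    rw [hE]
    exact (ENNReal.sum_lt_top.2 fun t _ => lt_of_le_of_ne le_top (hefin t)).ne
  have h2E : 2 * E ≤ 2 * ρ * E + 5 * T := le_trans le_add_self (key T)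
  have hsub : (2 - 2 * ρ) * E ≤ 5 * T := by
    rw [ENNReal.sub_mul fun _ _ => hEfin]
    exact tsub_le_iff_right.2 (by rwa [add_comm] at h2E)
  have hfinal : E ≤ 5 * T / (2 - 2 * ρ) :=
    (ENNReal.le_div_iff_mul_le (Or.inl (two_sub_ne_zero hρ)) (Or.inl two_sub_ne_top)).2
      (by rwa [mul_comm] at hsub)
  calc E ≤ 5 * T / (2 - 2 * ρ) := hfinal
    _ = 5 / (2 - 2 * ρ) * T := by rw [div_eq_mul_inv, div_eq_mul_inv]; ring

/-- Stability of the workload of one interfering pair of queues: the pair workload behaves as a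
single-server queue, and its time-averaged expectation is bounded. -/
lemma pair_sum_bound {Ω : Type*} [MeasurableSpace Ω] (μ : Measure Ω) [IsProbabilityMeasure μ]
    (A : Fin 3 → ℕ → Ω → ℕ)
    (hAmeas : ∀ i t, Measurable (A i t))
    (hA01 : ∀ i t ω, A i t ω ≤ 1)
    (hAindep : iIndepFun
      (fun p : Fin 3 × ℕ => fun ω => A p.1 p.2 ω) μ)
    (i₀ i₁ : Fin 3)
    (ρ : ℝ≥0∞) (hρ : ρ < 1)
    (hrate : ∀ t, ∫⁻ ω, ((A i₀ t ω : ℝ≥0∞) + (A i₁ t ω : ℝ≥0∞)) ∂μ = ρ)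
    (X : ℕ → Ω → ℕ) (hX0 : ∀ ω, X 0 ω = 0)
    (hrec : ∀ t ω, X (t + 1) ω = (X t ω - 1) + (A i₀ t ω + A i₁ t ω)) :
    ∀ T : ℕ, (∑ t ∈ Finset.range T, ∫⁻ ω, (X t ω : ℝ≥0∞) ∂μ) ≤ 5 / (2 - 2 * ρ) * T := by
  classical
  set B : ℕ → Ω → ℕ := fun t ω => A i₀ t ω + A i₁ t ω with hBdef
  have hXG : ∀ t ω, X t ω = histG i₀ i₁ t (fun p => A p.1 p.2 ω) := by
    intro t
    induction t with
    | zero => intro ω; simp [hX0, histG]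
    | succ t ih => intro ω; rw [hrec, ih, histG]
  have main : ∀ t, Measurable (X t) ∧ IndepFun (X t) (B t) μ := by
    intro t
    set S : Finset (Fin 3 × ℕ) := Finset.univ ×ˢ Finset.range t with hS
    set T' : Finset (Fin 3 × ℕ) := {(i₀, t), (i₁, t)} with hT
    set φ : (↥S → ℕ) → ℕ :=
      fun g => histG i₀ i₁ t (fun p => if h : p ∈ S then g ⟨p, h⟩ else 0) with hφdef
    set ψ : (↥T' → ℕ) → ℕ :=
      fun g => g ⟨(i₀, t), by simp [hT]⟩ + g ⟨(i₁, t), by simp [hT]⟩ with hψdef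
    have hrepX : X t = φ ∘ (fun ω (i : ↥S) => A i.1.1 i.1.2 ω) := by
      funext ω
      show X t ω = φ (fun i : ↥S => A i.1.1 i.1.2 ω)
      rw [hXG, hφdef]
      refine histG_congr _ _ _ _ _ fun p hp => ?_
      have hpS : p ∈ S := by
        simp [hS, Finset.mem_product, Finset.mem_range, hp]
      rw [dif_pos hpS]
    have hrepB : B t = ψ ∘ (fun ω (i : ↥T') => A i.1.1 i.1.2 ω) := by
      funext ω
      simp [hBdef, hψdef]
    constructor
    · have : Measurable (fun ω (i : ↥S) => A i.1.1 i.1.2 ω) :=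
        measurable_pi_lambda _ fun i => hAmeas _ _
      rw [hrepX]
      exact (measurable_of_countable φ).comp this
    · have hdisj : Disjoint S T' := by
        rw [Finset.disjoint_left]
        intro p hp hq
        simp only [hS, Finset.mem_product, Finset.mem_range] at hp
        simp only [hT, Finset.mem_insert, Finset.mem_singleton] at hq
        rcases hq with h | h <;> rw [h] at hp <;> exact absurd hp.2 (lt_irrefl t)
      have hbase := hAindep.indepFun_finset S T' hdisj fun p => hAmeas p.1 p.2
      have := hbase.comp (measurable_of_countable φ) (measurable_of_countable ψ)
      rw [hrepX, hrepB]
      exact this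
  have hcast : Measurable (fun n : ℕ => (n : ℝ≥0∞)) := measurable_of_countable _
  have hBmeas : ∀ t, Measurable (B t) := fun t => (hAmeas i₀ t).add (hAmeas i₁ t)
  refine drift_bound μ X B (fun t => (main t).1) hBmeas hX0 ?_ hrec ρ hρ ?_
  · intro t ω
    have h0 := hA01 i₀ t ω
    have h1 := hA01 i₁ t ω
    simp only [hBdef]
    omega
  · intro t
    have hInd : IndepFun (fun ω => (X t ω : ℝ≥0∞)) (fun ω => (B t ω : ℝ≥0∞)) μ :=
      (main t).2.comp hcast hcast
    have hmul := lintegral_mul_eq_lintegral_mul_lintegral_of_indepFun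
      (hcast.comp (main t).1) (hcast.comp (hBmeas t)) hInd
    have hBint : ∫⁻ ω, (B t ω : ℝ≥0∞) ∂μ = ρ := by
      rw [← hrate t]
      congr 1
      funext ω
      simp [hBdef]
    have hmul' : ∫⁻ ω, ((X t ω : ℝ≥0∞) * (B t ω : ℝ≥0∞)) ∂μ
        = (∫⁻ ω, (X t ω : ℝ≥0∞) ∂μ) * ∫⁻ ω, (B t ω : ℝ≥0∞) ∂μ := hmul
    rw [hmul', hBint, mul_comm]

/-- Throughput optimality of π̃_IQ for the 3-queue path graph. -/
theorem piIQtilde_throughput_optimal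
    {Ω : Type*} [MeasurableSpace Ω] (μ : Measure Ω) [IsProbabilityMeasure μ]
    (lam : Fin 3 → ℝ) (hlam : ∀ i, 0 ≤ lam i ∧ lam i ≤ 1)
    (hcap1 : lam 0 + lam 1 < 1) (hcap2 : lam 1 + lam 2 < 1)
    (A : Fin 3 → ℕ → Ω → ℕ)
    (hAmeas : ∀ i t, Measurable (A i t))
    (hA01 : ∀ i t ω, A i t ω ≤ 1)
    (hArate : ∀ i t, μ {ω | A i t ω = 1} = ENNReal.ofReal (lam i))
    (hAindep : iIndepFun
      (fun p : Fin 3 × ℕ => fun ω => A p.1 p.2 ω) μ)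
    (Q : ℕ → Fin 3 → Ω → ℕ)
    (hQ0 : ∀ i ω, Q 0 i ω = 0)
    (hQevol : ∀ t i ω,
      Q (t + 1) i ω = Q t i ω - piIQtilde (fun j => Q t j ω) i + A i t ω) :
    limsup (fun T : ℕ =>
        (∑ t ∈ Finset.range T, ∑ i, ∫⁻ ω, (Q t i ω : ℝ≥0∞) ∂μ) / (T : ℝ≥0∞))
      atTop < ⊤ := by
  have hcast : Measurable (fun n : ℕ => (n : ℝ≥0∞)) := measurable_of_countable _
  -- arrival means
  have hAmean : ∀ i t, ∫⁻ ω, (A i t ω : ℝ≥0∞) ∂μ = ENNReal.ofReal (lam i) := by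
    intro i t
    have hset : MeasurableSet {ω | A i t ω = 1} := hAmeas i t (measurableSet_singleton 1)
    have hind : (fun ω => (A i t ω : ℝ≥0∞)) = {ω | A i t ω = 1}.indicator 1 := by
      funext ω
      rcases Nat.le_one_iff_eq_zero_or_eq_one.1 (hA01 i t ω) with h | h <;>
        simp [Set.indicator, h]
    rw [hind, lintegral_indicator_one hset, hArate]
  have hrate1 : ∀ t, ∫⁻ ω, ((A 0 t ω : ℝ≥0∞) + (A 1 t ω : ℝ≥0∞)) ∂μ
      = ENNReal.ofReal (lam 0 + lam 1) := by
    intro t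
    rw [lintegral_add_left (f := fun ω => (A 0 t ω : ℝ≥0∞)) (hcast.comp (hAmeas 0 t)), hAmean, hAmean,
      ENNReal.ofReal_add (hlam 0).1 (hlam 1).1]
  have hrate2 : ∀ t, ∫⁻ ω, ((A 1 t ω : ℝ≥0∞) + (A 2 t ω : ℝ≥0∞)) ∂μ
      = ENNReal.ofReal (lam 1 + lam 2) := by
    intro t
    rw [lintegral_add_left (f := fun ω => (A 1 t ω : ℝ≥0∞)) (hcast.comp (hAmeas 1 t)), hAmean, hAmean,
      ENNReal.ofReal_add (hlam 1).1 (hlam 2).1]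
  set ρ₁ : ℝ≥0∞ := ENNReal.ofReal (lam 0 + lam 1) with hρ₁def
  set ρ₂ : ℝ≥0∞ := ENNReal.ofReal (lam 1 + lam 2) with hρ₂def
  have hρ₁ : ρ₁ < 1 := by
    rw [hρ₁def, ← ENNReal.ofReal_one]
    exact ENNReal.ofReal_lt_ofReal_iff_of_nonneg (by linarith [(hlam 0).1, (hlam 1).1]) |>.2 hcap1
  have hρ₂ : ρ₂ < 1 := by
    rw [hρ₂def, ← ENNReal.ofReal_one]
    exact ENNReal.ofReal_lt_ofReal_iff_of_nonneg (by linarith [(hlam 1).1, (hlam 2).1]) |>.2 hcap2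
  -- the pair recursions
  have hpair : ∀ t ω,
      (Q (t + 1) 0 ω + Q (t + 1) 1 ω = (Q t 0 ω + Q t 1 ω - 1) + (A 0 t ω + A 1 t ω))
      ∧ (Q (t + 1) 1 ω + Q (t + 1) 2 ω = (Q t 1 ω + Q t 2 ω - 1) + (A 1 t ω + A 2 t ω)) := by
    intro t ω
    have e0 := hQevol t 0 ω
    have e1 := hQevol t 1 ω
    have e2 := hQevol t 2 ω
    by_cases h02 : 0 < Q t 0 ω ∧ 0 < Q t 2 ω
    · simp only [piIQtilde, if_pos h02, Matrix.cons_val_zero, Matrix.cons_val_one,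
        Matrix.head_cons, Matrix.cons_val_two, Matrix.tail_cons] at e0 e1 e2
      obtain ⟨ha, hc⟩ := h02
      constructor <;> omega
    · by_cases h1 : 0 < Q t 1 ω
      · simp only [piIQtilde, if_neg h02, if_pos h1, Matrix.cons_val_zero, Matrix.cons_val_one,
          Matrix.head_cons, Matrix.cons_val_two, Matrix.tail_cons] at e0 e1 e2
        constructor <;> omega
      · simp only [piIQtilde, if_neg h02, if_neg h1, Matrix.cons_val_zero, Matrix.cons_val_one,
          Matrix.head_cons, Matrix.cons_val_two, Matrix.tail_cons] at e0 e1 e2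
        constructor <;> omega
  -- the two pair workload bounds
  have b1 := pair_sum_bound μ A hAmeas hA01 hAindep 0 1 ρ₁ hρ₁ hrate1
    (fun t ω => Q t 0 ω + Q t 1 ω) (fun ω => by simp [hQ0])
    (fun t ω => (hpair t ω).1)
  have b2 := pair_sum_bound μ A hAmeas hA01 hAindep 1 2 ρ₂ hρ₂ hrate2
    (fun t ω => Q t 1 ω + Q t 2 ω) (fun ω => by simp [hQ0])
    (fun t ω => (hpair t ω).2)
  set C : ℝ≥0∞ := 5 / (2 - 2 * ρ₁) + 5 / (2 - 2 * ρ₂) with hC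
  have hbound : ∀ T : ℕ,
      (∑ t ∈ Finset.range T, ∑ i, ∫⁻ ω, (Q t i ω : ℝ≥0∞) ∂μ) / (T : ℝ≥0∞) ≤ C := by
    intro T
    have hterm : ∀ t, (∑ i, ∫⁻ ω, (Q t i ω : ℝ≥0∞) ∂μ)
        ≤ (∫⁻ ω, ((Q t 0 ω + Q t 1 ω : ℕ) : ℝ≥0∞) ∂μ)
          + ∫⁻ ω, ((Q t 1 ω + Q t 2 ω : ℕ) : ℝ≥0∞) ∂μ := by
      intro t
      rw [Fin.sum_univ_three]
      have h1 : (∫⁻ ω, (Q t 0 ω : ℝ≥0∞) ∂μ) + ∫⁻ ω, (Q t 1 ω : ℝ≥0∞) ∂μ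
          ≤ ∫⁻ ω, ((Q t 0 ω + Q t 1 ω : ℕ) : ℝ≥0∞) ∂μ := by
        have := le_lintegral_add (μ := μ) (fun ω => (Q t 0 ω : ℝ≥0∞))
          (fun ω => (Q t 1 ω : ℝ≥0∞))
        simpa [Nat.cast_add] using this
      have h2 : (∫⁻ ω, (Q t 1 ω : ℝ≥0∞) ∂μ) + ∫⁻ ω, (Q t 2 ω : ℝ≥0∞) ∂μ
          ≤ ∫⁻ ω, ((Q t 1 ω + Q t 2 ω : ℕ) : ℝ≥0∞) ∂μ := by
        have := le_lintegral_add (μ := μ) (fun ω => (Q t 1 ω : ℝ≥0∞))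
          (fun ω => (Q t 2 ω : ℝ≥0∞))
        simpa [Nat.cast_add] using this
      calc (∫⁻ ω, (Q t 0 ω : ℝ≥0∞) ∂μ) + (∫⁻ ω, (Q t 1 ω : ℝ≥0∞) ∂μ)
            + ∫⁻ ω, (Q t 2 ω : ℝ≥0∞) ∂μ
          ≤ ((∫⁻ ω, (Q t 0 ω : ℝ≥0∞) ∂μ) + ∫⁻ ω, (Q t 1 ω : ℝ≥0∞) ∂μ)
            + ((∫⁻ ω, (Q t 1 ω : ℝ≥0∞) ∂μ) + ∫⁻ ω, (Q t 2 ω : ℝ≥0∞) ∂μ) := by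
              rw [add_assoc]
              gcongr
              exact self_le_add_right _ _
        _ ≤ _ := add_le_add h1 h2
    have hnum : (∑ t ∈ Finset.range T, ∑ i, ∫⁻ ω, (Q t i ω : ℝ≥0∞) ∂μ) ≤ C * T := by
      calc ∑ t ∈ Finset.range T, ∑ i, ∫⁻ ω, (Q t i ω : ℝ≥0∞) ∂μ
          ≤ ∑ t ∈ Finset.range T, ((∫⁻ ω, ((Q t 0 ω + Q t 1 ω : ℕ) : ℝ≥0∞) ∂μ)
            + ∫⁻ ω, ((Q t 1 ω + Q t 2 ω : ℕ) : ℝ≥0∞) ∂μ) :=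
            Finset.sum_le_sum fun t _ => hterm t
        _ = (∑ t ∈ Finset.range T, ∫⁻ ω, ((Q t 0 ω + Q t 1 ω : ℕ) : ℝ≥0∞) ∂μ)
            + ∑ t ∈ Finset.range T, ∫⁻ ω, ((Q t 1 ω + Q t 2 ω : ℕ) : ℝ≥0∞) ∂μ :=
            Finset.sum_add_distrib
        _ ≤ 5 / (2 - 2 * ρ₁) * T + 5 / (2 - 2 * ρ₂) * T := add_le_add (b1 T) (b2 T)
        _ = C * T := by rw [hC]; ring
    exact ENNReal.div_le_of_le_mul hnum
  have hlim : limsup (fun T : ℕ =>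
      (∑ t ∈ Finset.range T, ∑ i, ∫⁻ ω, (Q t i ω : ℝ≥0∞) ∂μ) / (T : ℝ≥0∞)) atTop ≤ C :=
    limsup_le_of_le (by isBoundedDefault) (Filter.Eventually.of_forall hbound)
  refine lt_of_le_of_lt hlim ?_
  rw [hC]
  exact ENNReal.add_lt_top.2
    ⟨ENNReal.div_lt_top (by norm_num) (two_sub_ne_zero hρ₁),
      ENNReal.div_lt_top (by norm_num) (two_sub_ne_zero hρ₂)⟩
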